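/- Every finite simple graph G satisfies α(G) ≥ v(G)/(d(G)+1), where α(G) is the independence number and d(G) = 2e(G)/v(G) is the average degree. -/

import Mathlib

private lemma turan_key (n k E E' t : ℤ) (hk : 1 ≤ k) (h1 : k ≤ n) (h2 : n*(k-1) ≤ 2*E)
    (h3 : 2*E' + k*(k-1) ≤ 2*E) (h4 : (n-k)^2 ≤ t*(2*E'+(n-k)))
    (ht : 0 ≤ t) (hE' : 0 ≤ E') : n^2 ≤ (t+1)*(2*E+n) := by
  nlinarith [sq_nonneg (2*E+n - n*k), mul_nonneg ht (by nlinarith : (0:ℤ) ≤ 2*E+n - n*k),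
    mul_le_mul_of_nonneg_left h4 (by nlinarith : (0:ℤ) ≤ 2*E+n),
    mul_nonneg (mul_nonneg ht (by nlinarith : (0:ℤ) ≤ 2*E+n))
      (by nlinarith : (0:ℤ) ≤ (2*E+n-k^2) - (2*E'+(n-k))),
    sq_nonneg (n-k)]

private lemma turan_aux : ∀ (n : ℕ) {V : Type*} [Fintype V] [DecidableEq V]
    (G : SimpleGraph V) [DecidableRel G.Adj], Fintype.card V = n →
    ∃ s : Finset V, (∀ u ∈ s, ∀ v ∈ s, u ≠ v → ¬ G.Adj u v) ∧
      n ^ 2 ≤ s.card * (2 * G.edgeFinset.card + n) := by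
  intro n
  induction n using Nat.strong_induction_on with
  | _ n ih =>
    intro V _ _ G _ hn
    rcases isEmpty_or_nonempty V with hV | hV
    · refine ⟨∅, by simp, ?_⟩
      have : n = 0 := by rw [← hn]; exact Fintype.card_eq_zero
      simp [this]
    · obtain ⟨v, hv⟩ := G.exists_minimal_degree_vertex
      set δ := G.minDegree with hδ
      set C : Finset V := insert v (G.neighborFinset v) with hC
      set T : Finset V := Cᶜ with hT
      have hvC : v ∈ C := Finset.mem_insert_self _ _
      have hCcard : C.card = δ + 1 := by
        rw [hC, Finset.card_insert_of_notMem (by simp), G.card_neighborFinset_eq_degree, ← hv]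
      have hkn : δ + 1 ≤ n := by
        rw [← hCcard, ← hn]; exact Finset.card_le_univ C
      have hTcard : T.card = n - (δ + 1) := by
        rw [hT, Finset.card_compl, hCcard, hn]
      -- the induced graph on T
      let G' : SimpleGraph {x // x ∈ T} := G.comap Subtype.val
      have instDR : DecidableRel G'.Adj := fun a b => ‹DecidableRel G.Adj› _ _
      -- degree comparison
      have hdeg : ∀ a : {x // x ∈ T}, G'.degree a ≤ G.degree a.val := by
        intro a
        rw [← SimpleGraph.card_neighborFinset_eq_degree,
          ← SimpleGraph.card_neighborFinset_eq_degree]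
        refine Finset.card_le_card_of_injOn Subtype.val ?_ Subtype.val_injective.injOn
        intro b hb
        rw [Finset.mem_coe, SimpleGraph.mem_neighborFinset] at hb ⊢
        exact hb
      -- edge count comparisons
      have hsum : ∑ u, G.degree u = 2 * G.edgeFinset.card :=
        G.sum_degrees_eq_twice_card_edges
      have hsum' : ∑ a : {x // x ∈ T}, G'.degree a = 2 * G'.edgeFinset.card :=
        G'.sum_degrees_eq_twice_card_edges
      have hsplit : ∑ u ∈ C, G.degree u + ∑ u ∈ T, G.degree u = ∑ u, G.degree u := by
        rw [hT]; exact Finset.sum_add_sum_compl C _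
      have hmin : ∀ u : V, δ ≤ G.degree u := fun u => G.minDegree_le_degree u
      have hCsum : C.card * δ ≤ ∑ u ∈ C, G.degree u := by
        simpa using Finset.card_nsmul_le_sum C (fun u => G.degree u) δ (fun u _ => hmin u)
      have hTsum : 2 * G'.edgeFinset.card ≤ ∑ u ∈ T, G.degree u := by
        rw [← hsum']
        calc ∑ a : {x // x ∈ T}, G'.degree a ≤ ∑ a : {x // x ∈ T}, G.degree a.val :=
              Finset.sum_le_sum (fun a _ => hdeg a)
          _ = ∑ u ∈ T, G.degree u := Finset.sum_coe_sort T (fun u => G.degree u)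
      have hEbound : 2 * G'.edgeFinset.card + (δ + 1) * δ ≤ 2 * G.edgeFinset.card := by
        rw [← hsum, ← hsplit]
        have := hCsum
        rw [hCcard] at this
        omega
      have hnδ : n * δ ≤ 2 * G.edgeFinset.card := by
        rw [← hsum, ← hn]
        simpa using Finset.card_nsmul_le_sum Finset.univ (fun u => G.degree u) δ (fun u _ => hmin u)
      -- inductive hypothesis
      have hlt : T.card < n := by omega
      obtain ⟨s', hs'indep, hs'card⟩ := ih T.card hlt G' (Fintype.card_coe T)
      -- build the independent set
      have hvnot : v ∉ s'.map ⟨Subtype.val, Subtype.val_injective⟩ := by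
        simp only [Finset.mem_map, Function.Embedding.coeFn_mk]
        rintro ⟨a, _, h⟩
        exact (Finset.mem_compl.mp (h ▸ a.2)) hvC
      have hnoadj : ∀ u ∈ T, ¬ G.Adj v u := by
        intro u hu hadj
        rw [hT, Finset.mem_compl] at hu
        exact hu (Finset.mem_insert_of_mem (by rwa [SimpleGraph.mem_neighborFinset]))
      refine ⟨insert v (s'.map ⟨Subtype.val, Subtype.val_injective⟩), ?_, ?_⟩
      · intro u hu w hw hne
        rcases Finset.mem_insert.mp hu with rfl | hu
        · rcases Finset.mem_insert.mp hw with rfl | hw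
          · exact absurd rfl hne
          · obtain ⟨b, hb, rfl⟩ := Finset.mem_map.mp hw
            exact hnoadj b.val b.2
        · obtain ⟨a, ha, rfl⟩ := Finset.mem_map.mp hu
          rcases Finset.mem_insert.mp hw with rfl | hw
          · intro hadj
            exact hnoadj a.val a.2 hadj.symm
          · obtain ⟨b, hb, rfl⟩ := Finset.mem_map.mp hw
            have hab : a ≠ b := fun h => hne (by rw [h])
            exact hs'indep a ha b hb hab
      · rw [Finset.card_insert_of_notMem hvnot, Finset.card_map]
        have h4 := hs'card
        rw [hTcard] at h4
        -- pass to integers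
        zify at h4 hEbound hnδ ⊢
        rw [Nat.cast_sub hkn] at h4
        have := turan_key (n : ℤ) (δ + 1) (G.edgeFinset.card : ℤ) (G'.edgeFinset.card : ℤ)
          (s'.card : ℤ) (by omega) (by exact_mod_cast hkn)
          (by linarith [hnδ]) (by linarith [hEbound])
          (by push_cast at h4 ⊢; linarith) (by positivity) (by positivity)


        linarith

/-- Turán-type bound: every finite simple graph `G` on at least one vertex has an
independent set of size at least `v(G) / (d(G) + 1)` where `d(G) = 2 e(G) / v(G)`. -/
theorem stmt3 {V : Type*} [Fintype V] [DecidableEq V] [Nonempty V]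
    (G : SimpleGraph V) [DecidableRel G.Adj] :
    ∃ s : Finset V, (∀ u ∈ s, ∀ v ∈ s, u ≠ v → ¬ G.Adj u v) ∧
      (Fintype.card V : ℝ) /
        ((2 * G.edgeFinset.card : ℝ) / (Fintype.card V : ℝ) + 1) ≤ (s.card : ℝ) := by
  obtain ⟨s, hindep, hcard⟩ := turan_aux (Fintype.card V) G rfl
  refine ⟨s, hindep, ?_⟩
  have hn : (0:ℝ) < Fintype.card V := by exact_mod_cast Fintype.card_pos
  have h : (Fintype.card V : ℝ)^2 ≤ (s.card : ℝ) * (2*(G.edgeFinset.card:ℝ) + Fintype.card V) := by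
    exact_mod_cast hcard
  set N : ℝ := (Fintype.card V : ℝ)
  set E : ℝ := (G.edgeFinset.card : ℝ)
  have hE : (0:ℝ) ≤ E := by positivity
  have heq : N / (2*E/N + 1) = N^2 / (2*E + N) := by
    field_simp
  rw [heq, div_le_iff₀ (by linarith)]
  linarith
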